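/- If (μ_n) is a regularly varying sequence of positive reals with index -b (b>0), then (1/N)∑_{n=1}^N log(μ_n/μ_N) converges to b/ln(2) as N→∞. -/

import Mathlib

open Filter MeasureTheory Set
open scoped ENNReal Pointwise

section helpers
variable {b : ℝ} {μ : ℕ → ℝ}



lemma log_le_two_sqrt {x : ℝ} (hx : 0 < x) : Real.log x ≤ 2 * Real.sqrt x := by
  have h1 : Real.log (Real.sqrt x) ≤ Real.sqrt x - 1 :=
    Real.log_le_sub_one_of_pos (Real.sqrt_pos.2 hx)
  have h2 : Real.log (Real.sqrt x) = Real.log x / 2 := Real.log_sqrt hx.le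
  nlinarith [Real.sqrt_nonneg x]

lemma sum_inv_sqrt (M : ℕ) : ∑ n ∈ Finset.Icc 1 M, (Real.sqrt n)⁻¹ ≤ 2 * Real.sqrt M := by
  induction M with
  | zero => simp
  | succ M ih =>
    rw [Finset.sum_Icc_succ_top (by omega)]
    have hs : (0:ℝ) < Real.sqrt (M+1) := Real.sqrt_pos.2 (by positivity)
    have key : 2 * Real.sqrt M * Real.sqrt (M+1) ≤ 2 * (M:ℝ) + 1 := by
      have : Real.sqrt M * Real.sqrt (M+1) = Real.sqrt (M * (M+1)) :=
        (Real.sqrt_mul (by positivity) _).symm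
      rw [mul_assoc, this]
      have : Real.sqrt ((M:ℝ) * (M+1)) ≤ (M:ℝ) + 1/2 := by
        rw [show ((M:ℝ) + 1/2) = Real.sqrt (((M:ℝ)+1/2)^2) by
          rw [Real.sqrt_sq (by positivity)]]
        apply Real.sqrt_le_sqrt; nlinarith
      nlinarith
    have h2 : ((M:ℕ):ℝ) + 1 = ((M+1:ℕ):ℝ) := by push_cast; ring
    have hsq : Real.sqrt ((M:ℝ)+1) * Real.sqrt ((M:ℝ)+1) = (M:ℝ)+1 :=
      Real.mul_self_sqrt (by positivity)
    have : (Real.sqrt ((M:ℝ)+1))⁻¹ ≤ 2 * Real.sqrt ((M:ℝ)+1) - 2 * Real.sqrt M := by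
      rw [inv_le_iff_one_le_mul₀ hs]
      nlinarith
    push_cast at *
    linarith

lemma fact_bounds (N : ℕ) (hN : 1 ≤ N) :
    (N:ℝ) * Real.log N - N ≤ ∑ n ∈ Finset.Icc 1 N, Real.log n ∧
    ∑ n ∈ Finset.Icc 1 N, Real.log n ≤ ((N:ℝ)+1) * Real.log N - N + 1 := by
  induction N with
  | zero => omega
  | succ N ih =>
    rcases Nat.eq_or_lt_of_le hN with h1 | h1
    · simp [← h1]
    have hN1 : 1 ≤ N := by omega
    obtain ⟨ihl, ihu⟩ := ih hN1
    rw [Finset.sum_Icc_succ_top (by omega)]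
    have hNpos : (0:ℝ) < N := by positivity
    have hN1pos : (0:ℝ) < (N:ℝ)+1 := by positivity
    have hlog : Real.log (((N:ℝ)+1)/N) ≤ 1/N := by
      have := Real.log_le_sub_one_of_pos (show (0:ℝ) < ((N:ℝ)+1)/N by positivity)
      have h2 : ((N:ℝ)+1)/N - 1 = 1/N := by field_simp; ring
      linarith
    have hlog2 : 1/((N:ℝ)+1) ≤ Real.log (((N:ℝ)+1)/N) := by
      have := Real.log_le_sub_one_of_pos (show (0:ℝ) < (N:ℝ)/(N+1) by positivity)
      have h2 : Real.log ((N:ℝ)/(N+1)) = - Real.log (((N:ℝ)+1)/N) := by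
        rw [← Real.log_inv]; congr 1; field_simp
      have h3 : (N:ℝ)/(N+1) - 1 = -(1/((N:ℝ)+1)) := by field_simp; ring
      rw [h2, h3] at this; linarith
    have hld : Real.log (((N:ℝ)+1)/N) = Real.log ((N:ℝ)+1) - Real.log N :=
      Real.log_div (by positivity) (by positivity)
    rw [hld] at hlog hlog2
    have e1 : (N:ℝ)*(Real.log ((N:ℝ)+1) - Real.log N) ≤ 1 := by
      have := mul_le_mul_of_nonneg_left hlog hNpos.le
      rw [mul_one_div, div_self (ne_of_gt hNpos)] at this; linarith
    have e2 : 1 ≤ ((N:ℝ)+1)*(Real.log ((N:ℝ)+1) - Real.log N) := by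
      have := mul_le_mul_of_nonneg_left hlog2 hN1pos.le
      rw [mul_one_div, div_self (ne_of_gt hN1pos)] at this; linarith
    push_cast
    constructor
    · nlinarith
    · nlinarith


lemma ptwise (hpos : ∀ n, 0 < μ n)
    (hrv : ∀ α : ℝ, 0 < α →
      Tendsto (fun n : ℕ => μ ⌊α * n⌋₊ / μ n) atTop (nhds (α ^ (-b))))
    {α : ℝ} (hα : 0 < α) :
    Tendsto (fun n : ℕ => Real.log (μ ⌊α * n⌋₊) - Real.log (μ n)) atTop
      (nhds (-b * Real.log α)) := by
  have h1 := hrv α hα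
  have h2 : Tendsto (fun n : ℕ => Real.log (μ ⌊α * n⌋₊ / μ n)) atTop
      (nhds (Real.log (α ^ (-b)))) :=
    (Real.continuousAt_log (ne_of_gt (Real.rpow_pos_of_pos hα (-b)))).tendsto.comp h1
  rw [Real.log_rpow hα] at h2
  refine h2.congr (fun n => ?_)
  rw [Real.log_div (ne_of_gt (hpos _)) (ne_of_gt (hpos _))]

lemma uct (hpos : ∀ n, 0 < μ n)
    (hrv : ∀ α : ℝ, 0 < α →
      Tendsto (fun n : ℕ => μ ⌊α * n⌋₊ / μ n) atTop (nhds (α ^ (-b))))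
    {δ ε : ℝ} (hδ0 : 0 < δ) (hδ1 : δ < 1) (hε : 0 < ε) :
    ∃ N₀ : ℕ, ∀ N : ℕ, N₀ ≤ N → ∀ n : ℕ, δ * N ≤ n → n ≤ N →
      |Real.log (μ n) - Real.log (μ N) + b * (Real.log n - Real.log N)| ≤ ε := by
  by_contra hcon
  push_neg at hcon
  choose Nf hNf nf hd1 hd2 hd3 using hcon
  have hNtop : Tendsto Nf atTop atTop := tendsto_atTop_mono hNf tendsto_id
  have hntop : Tendsto nf atTop atTop := by
    rw [← tendsto_natCast_atTop_iff (R := ℝ)]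
    have h1 : Tendsto (fun k => δ * ((Nf k : ℕ) : ℝ)) atTop atTop :=
      (tendsto_natCast_atTop_iff.2 hNtop).const_mul_atTop hδ0
    exact tendsto_atTop_mono (fun k => hd1 k) h1
  -- the two families of sets
  set E : ℕ → Set ℝ := fun m => ⋂ k, ⋂ (_ : m ≤ k),
    {β : ℝ | |Real.log (μ ⌊β * ((Nf k : ℕ) : ℝ)⌋₊) - Real.log (μ (Nf k)) + b * Real.log β| ≤ ε/2}
    with hEdef
  set F : ℕ → Set ℝ := fun m => ⋂ k, ⋂ (_ : m ≤ k),
    {γ : ℝ | |Real.log (μ ⌊γ * ((nf k : ℕ) : ℝ)⌋₊) - Real.log (μ (nf k)) + b * Real.log γ| ≤ ε/2}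
    with hFdef
  have hmeas : ∀ c : ℕ, MeasurableSet
      {β : ℝ | |Real.log (μ ⌊β * ((c : ℕ) : ℝ)⌋₊) - Real.log (μ c) + b * Real.log β| ≤ ε/2} := by
    intro c
    have hm : Measurable (fun β : ℝ =>
        Real.log (μ ⌊β * ((c : ℕ) : ℝ)⌋₊) - Real.log (μ c) + b * Real.log β) := by
      have h1 : Measurable (fun β : ℝ => ⌊β * ((c : ℕ) : ℝ)⌋₊) :=
        Nat.measurable_floor.comp (measurable_id.mul_const _)
      have h2 : Measurable (fun β : ℝ => Real.log (μ ⌊β * ((c : ℕ) : ℝ)⌋₊)) :=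
        Measurable.comp (measurable_from_nat (f := fun k => Real.log (μ k))) h1
      exact (h2.sub measurable_const).add (measurable_const.mul Real.measurable_log)
    exact measurableSet_le hm.abs measurable_const
  have hEmeas : ∀ m, MeasurableSet (E m) := fun m =>
    MeasurableSet.iInter fun k => MeasurableSet.iInter fun _ => hmeas _
  have hFmeas : ∀ m, MeasurableSet (F m) := fun m =>
    MeasurableSet.iInter fun k => MeasurableSet.iInter fun _ => hmeas _
  -- pointwise convergence gives coverage
  have hcovgen : ∀ (Mf : ℕ → ℕ), Tendsto Mf atTop atTop → ∀ β : ℝ, 0 < β →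
      ∃ m, ∀ k, m ≤ k →
        |Real.log (μ ⌊β * ((Mf k : ℕ) : ℝ)⌋₊) - Real.log (μ (Mf k)) + b * Real.log β| ≤ ε/2 := by
    intro Mf hMf β hβ
    have h0 := (ptwise hpos hrv hβ).comp hMf
    have h1 := h0.add_const (b * Real.log β)
    rw [show -b * Real.log β + b * Real.log β = 0 by ring] at h1
    have h2 : ∀ᶠ k in atTop,
        |(fun k => Real.log (μ ⌊β * ((Mf k : ℕ) : ℝ)⌋₊) - Real.log (μ (Mf k))
          + b * Real.log β) k| < ε/2 := by
      have := NormedAddCommGroup.tendsto_nhds_zero.mp h1 (ε/2) (by linarith)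
      simpa [Real.norm_eq_abs] using this
    obtain ⟨m, hm⟩ := eventually_atTop.1 h2
    exact ⟨m, fun k hk => (hm k hk).le⟩
  -- measures of exceptional sets tend to 0
  have hmeaslim : ∀ (G : ℕ → Set ℝ) (a c : ℝ), 0 < a → (∀ m, MeasurableSet (G m)) →
      Monotone G → (∀ β, β ∈ Icc a c → ∃ m, β ∈ G m) →
      Tendsto (fun m => volume (Icc a c \ G m)) atTop (nhds 0) := by
    intro G a c ha hGm hGmono hGcov
    have hanti : Antitone (fun m => Icc a c \ G m) := fun m m' h =>
      diff_subset_diff_right (hGmono h)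
    have hempty : ⋂ m, (Icc a c \ G m) = ∅ := by
      rw [Set.eq_empty_iff_forall_notMem]
      intro x hx
      rw [Set.mem_iInter] at hx
      obtain ⟨m, hm⟩ := hGcov x (hx 0).1
      exact (hx m).2 hm
    have := tendsto_measure_iInter_atTop (μ := volume)
      (fun m => ((measurableSet_Icc.diff (hGm m)).nullMeasurableSet))
      hanti ⟨0, (lt_of_le_of_lt (measure_mono diff_subset) measure_Icc_lt_top).ne⟩
    rw [hempty] at this
    rw [measure_empty] at this; exact this
  have hEmono : Monotone E := by
    intro m m' hmm' β hβ
    rw [Set.mem_iInter₂] at *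
    exact fun k hk => hβ k (le_trans hmm' hk)
  have hFmono : Monotone F := by
    intro m m' hmm' β hβ
    rw [Set.mem_iInter₂] at *
    exact fun k hk => hβ k (le_trans hmm' hk)
  have hEcov : ∀ β, β ∈ Icc δ 2 → ∃ m, β ∈ E m := by
    intro β hβ
    obtain ⟨m, hm⟩ := hcovgen Nf hNtop β (lt_of_lt_of_le hδ0 hβ.1)
    exact ⟨m, by rw [hEdef]; exact Set.mem_iInter₂.2 hm⟩
  have hFcov : ∀ γ, γ ∈ Icc (1:ℝ) 2 → ∃ m, γ ∈ F m := by
    intro γ hγ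
    obtain ⟨m, hm⟩ := hcovgen nf hntop γ (lt_of_lt_of_le one_pos hγ.1)
    exact ⟨m, by rw [hFdef]; exact Set.mem_iInter₂.2 hm⟩
  obtain ⟨m₁, hm₁⟩ := eventually_atTop.1 <|
    (hmeaslim E δ 2 hδ0 hEmeas hEmono hEcov).eventually_lt_const
      (by simp [ENNReal.ofReal_pos]; linarith : (0:ℝ≥0∞) < ENNReal.ofReal (δ/4))
  obtain ⟨m₂, hm₂⟩ := eventually_atTop.1 <|
    (hmeaslim F 1 2 one_pos hFmeas hFmono hFcov).eventually_lt_const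
      (by simp [ENNReal.ofReal_pos]; linarith : (0:ℝ≥0∞) < ENNReal.ofReal (δ/4))
  -- the chosen index
  set K := max (max m₁ m₂) 1 with hK
  have hK1 : 1 ≤ K := le_max_right _ _
  have hNK1 : 1 ≤ Nf K := le_trans hK1 (hNf K)
  have hNKpos : (0:ℝ) < ((Nf K : ℕ) : ℝ) := by exact_mod_cast hNK1
  have hnKpos : (0:ℝ) < ((nf K : ℕ) : ℝ) := lt_of_lt_of_le (by positivity) (hd1 K)
  set α := ((nf K : ℕ) : ℝ) / ((Nf K : ℕ) : ℝ) with hαdef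
  have hα0 : 0 < α := div_pos hnKpos hNKpos
  have hαδ : δ ≤ α := (le_div_iff₀ hNKpos).2 (hd1 K)
  have hα1 : α ≤ 1 := by
    rw [div_le_one hNKpos]; exact_mod_cast hd2 K
  -- nonemptiness of the good set
  have hne : (E m₁ ∩ (α • F m₂) ∩ Icc α (2*α)).Nonempty := by
    by_contra hemp
    rw [Set.not_nonempty_iff_eq_empty] at hemp
    have hsub : Icc α (2*α) ⊆ (Icc δ 2 \ E m₁) ∪ (α • (Icc (1:ℝ) 2 \ F m₂)) := by
      intro x hx
      by_cases hxE : x ∈ E m₁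
      · by_cases hxF : x ∈ α • F m₂
        · exact (Set.eq_empty_iff_forall_notMem.1 hemp x ⟨⟨hxE, hxF⟩, hx⟩).elim
        · right
          refine ⟨x / α, ⟨⟨?_, ?_⟩, ?_⟩, ?_⟩
          · rw [le_div_iff₀ hα0]; linarith [hx.1]
          · rw [div_le_iff₀ hα0]; linarith [hx.2]
          · intro hmem
            exact hxF ⟨x / α, hmem, by simp only [smul_eq_mul]; field_simp⟩
          · simp only [smul_eq_mul]; field_simp
      · left
        exact ⟨⟨le_trans hαδ hx.1, le_trans hx.2 (by linarith)⟩, hxE⟩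
    have hv1 : volume (Icc δ 2 \ E m₁) < ENNReal.ofReal (δ/4) := hm₁ m₁ le_rfl
    have hv2 : volume (α • (Icc (1:ℝ) 2 \ F m₂)) ≤ ENNReal.ofReal (δ/4) := by
      rw [Measure.addHaar_smul_of_nonneg volume hα0.le]
      have h1 : volume (Icc (1:ℝ) 2 \ F m₂) ≤ ENNReal.ofReal (δ/4) := (hm₂ m₂ le_rfl).le
      calc ENNReal.ofReal (α ^ Module.finrank ℝ ℝ) * volume (Icc (1:ℝ) 2 \ F m₂)
          ≤ 1 * ENNReal.ofReal (δ/4) := by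
            refine mul_le_mul' ?_ h1
            rw [Module.finrank_self, pow_one]
            exact ENNReal.ofReal_le_one.2 hα1
        _ = ENNReal.ofReal (δ/4) := one_mul _
    have hmono := measure_mono (μ := volume) hsub
    rw [Real.volume_Icc] at hmono
    have hsum := le_trans hmono (measure_union_le _ _)
    have : ENNReal.ofReal (2*α - α) ≤ ENNReal.ofReal (δ/4) + ENNReal.ofReal (δ/4) :=
      le_trans hsum (add_le_add hv1.le hv2)
    rw [← ENNReal.ofReal_add (by linarith) (by linarith)] at this
    have := (ENNReal.ofReal_le_ofReal_iff (by linarith : (0:ℝ) ≤ δ/4 + δ/4)).1 this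
    linarith
  obtain ⟨β, ⟨hβE, hβsm⟩, hβI⟩ := hne
  obtain ⟨γ, hγF, hβeq⟩ := hβsm
  simp only [smul_eq_mul] at hβeq
  have hγpos : 0 < γ := by
    nlinarith [hβI.1, hβI.2]
  have hβpos : 0 < β := lt_of_lt_of_le hα0 hβI.1
  -- extract the two estimates
  have hE' : |Real.log (μ ⌊β * ((Nf K : ℕ) : ℝ)⌋₊) - Real.log (μ (Nf K)) + b * Real.log β| ≤ ε/2 := by
    have := Set.mem_iInter₂.1 hβE K (le_trans (le_max_left m₁ m₂) (le_max_left _ _))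
    exact this
  have hF' : |Real.log (μ ⌊γ * ((nf K : ℕ) : ℝ)⌋₊) - Real.log (μ (nf K)) + b * Real.log γ| ≤ ε/2 := by
    have := Set.mem_iInter₂.1 hγF K (le_trans (le_max_right m₁ m₂) (le_max_left _ _))
    exact this
  have hfloor : ⌊β * ((Nf K : ℕ) : ℝ)⌋₊ = ⌊γ * ((nf K : ℕ) : ℝ)⌋₊ := by
    congr 1
    rw [← hβeq, hαdef]
    field_simp
  rw [hfloor] at hE'
  have hlogβ : Real.log β = Real.log α + Real.log γ := by
    rw [← hβeq, Real.log_mul (ne_of_gt hα0) (ne_of_gt hγpos)]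
  have hlogα : Real.log α = Real.log ((nf K : ℕ) : ℝ) - Real.log ((Nf K : ℕ) : ℝ) :=
    Real.log_div (ne_of_gt hnKpos) (ne_of_gt hNKpos)
  have hkey : (Real.log (μ ⌊γ * ((nf K : ℕ) : ℝ)⌋₊) - Real.log (μ (Nf K)) + b * Real.log β)
      - (Real.log (μ ⌊γ * ((nf K : ℕ) : ℝ)⌋₊) - Real.log (μ (nf K)) + b * Real.log γ)
      = Real.log (μ (nf K)) - Real.log (μ (Nf K))
        + b * (Real.log ((nf K : ℕ) : ℝ) - Real.log ((Nf K : ℕ) : ℝ)) := by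
    rw [hlogβ, hlogα]; ring
  have hbad := hd3 K
  have habs : |(Real.log (μ ⌊γ * ((nf K : ℕ) : ℝ)⌋₊) - Real.log (μ (Nf K)) + b * Real.log β)
      - (Real.log (μ ⌊γ * ((nf K : ℕ) : ℝ)⌋₊) - Real.log (μ (nf K)) + b * Real.log γ)| ≤ ε := by
    calc |(Real.log (μ ⌊γ * ((nf K : ℕ) : ℝ)⌋₊) - Real.log (μ (Nf K)) + b * Real.log β)
        - (Real.log (μ ⌊γ * ((nf K : ℕ) : ℝ)⌋₊) - Real.log (μ (nf K)) + b * Real.log γ)|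
        ≤ |Real.log (μ ⌊γ * ((nf K : ℕ) : ℝ)⌋₊) - Real.log (μ (Nf K)) + b * Real.log β|
          + |Real.log (μ ⌊γ * ((nf K : ℕ) : ℝ)⌋₊) - Real.log (μ (nf K)) + b * Real.log γ| :=
          abs_sub _ _
      _ ≤ ε/2 + ε/2 := add_le_add hE' hF'
      _ = ε := by ring
  rw [hkey] at habs
  linarith


lemma potter (hb : 0 < b) (hpos : ∀ n, 0 < μ n)
    (hrv : ∀ α : ℝ, 0 < α →
      Tendsto (fun n : ℕ => μ ⌊α * n⌋₊ / μ n) atTop (nhds (α ^ (-b)))) :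
    ∃ C : ℝ, 0 < C ∧ ∃ N₁ : ℕ, 1 ≤ N₁ ∧ ∀ N : ℕ, N₁ ≤ N → ∀ n : ℕ, 1 ≤ n → n ≤ N →
      |Real.log (μ n) - Real.log (μ N)| ≤ C * (1 + (Real.log N - Real.log n)) := by
  have hlog2 : (0:ℝ) < Real.log 2 := Real.log_pos one_lt_two
  obtain ⟨N₀', huct⟩ := uct hpos hrv (δ := 1/3) (ε := 1) (by norm_num) (by norm_num) one_pos
  set N₀ := max N₀' 1 with hN₀def
  have hN₀1 : 1 ≤ N₀ := le_max_right _ _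
  set c := 1 + b * Real.log 3 with hcdef
  have hc0 : 0 < c := by
    have := Real.log_pos (by norm_num : (1:ℝ) < 3)
    nlinarith
  -- base estimate
  have hbase : ∀ N : ℕ, N₀ ≤ N → ∀ n : ℕ, (N:ℝ)/3 ≤ n → n ≤ N →
      |Real.log (μ n) - Real.log (μ N)| ≤ c := by
    intro N hN n hn3 hnN
    have hNpos : (0:ℝ) < N := by
      have : 1 ≤ N := le_trans hN₀1 hN
      exact_mod_cast this
    have hnpos : (0:ℝ) < n := lt_of_lt_of_le (by linarith) hn3
    have h1 := huct N (le_trans (le_max_left _ _) hN) n (by linarith) hnN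
    have hle : Real.log n ≤ Real.log N :=
      Real.log_le_log hnpos (by exact_mod_cast hnN)
    have hratio : Real.log N - Real.log n ≤ Real.log 3 := by
      rw [← Real.log_div (ne_of_gt hNpos) (ne_of_gt hnpos)]
      have : (N:ℝ)/(n:ℝ) ≤ 3 := by
        rw [div_le_iff₀ hnpos]; linarith
      exact Real.log_le_log (by positivity) this
    rw [abs_le] at h1 ⊢
    constructor
    · nlinarith
    · nlinarith [mul_le_mul_of_nonneg_left hratio hb.le]
  -- chained estimate by strong induction
  have hstep : ∀ N : ℕ, ∀ n : ℕ, N₀ ≤ n → n ≤ N →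
      |Real.log (μ n) - Real.log (μ N)| ≤ c + (c / Real.log 2) * (Real.log N - Real.log n) := by
    intro N
    induction N using Nat.strong_induction_on with
    | _ N ih =>
      intro n hn hnN
      have hn1 : 1 ≤ n := le_trans hN₀1 hn
      have hnpos : (0:ℝ) < n := by exact_mod_cast hn1
      have hNpos : (0:ℝ) < N := lt_of_lt_of_le hnpos (by exact_mod_cast hnN)
      have hlogle : Real.log n ≤ Real.log N :=
        Real.log_le_log hnpos (by exact_mod_cast hnN)
      by_cases hcase : (N:ℝ)/3 ≤ n
      · have h1 := hbase N (le_trans hn hnN) n hcase hnN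
        have h2 : 0 ≤ (c / Real.log 2) * (Real.log N - Real.log n) := by
          apply mul_nonneg (by positivity); linarith
        linarith
      · push_neg at hcase
        have h3n : 3 * n < N := by
          have : (3:ℝ) * n < N := by rw [mul_comm]; exact (lt_div_iff₀ (by norm_num)).1 hcase
          exact_mod_cast this
        set N' := N / 2 with hN'def
        have hnN' : n ≤ N' := by
          rw [hN'def, Nat.le_div_iff_mul_le (by norm_num)]; omega
        have hN'N : N' < N := Nat.div_lt_self (by omega) (by norm_num)
        have h2N' : 2 * N' ≤ N := by omega
        have h2N'' : N ≤ 2 * N' + 1 := by omega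
        have hN'pos : (0:ℝ) < N' := lt_of_lt_of_le hnpos (by exact_mod_cast hnN')
        have hN'3 : (N:ℝ)/3 ≤ N' := by
          have hc1 : (N:ℝ) ≤ 2*(N':ℝ) + 1 := by exact_mod_cast h2N''
          have hN4 : (4:ℝ) ≤ N := by
            have : 4 ≤ N := by omega
            exact_mod_cast this
          linarith
        have hih := ih N' hN'N n hn hnN'
        have hb2 := hbase N (le_trans hn hnN) N' hN'3 (le_of_lt hN'N)
        have hlog2le : Real.log 2 ≤ Real.log N - Real.log N' := by
          rw [← Real.log_div (ne_of_gt hNpos) (ne_of_gt hN'pos)]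
          apply Real.log_le_log (by norm_num)
          rw [le_div_iff₀ hN'pos]
          have : (2:ℝ) * N' ≤ N := by exact_mod_cast h2N'
          linarith
        have hkey : c ≤ (c / Real.log 2) * (Real.log N - Real.log N') := by
          have h4 := mul_le_mul_of_nonneg_left hlog2le (le_of_lt (div_pos hc0 hlog2))
          rwa [div_mul_cancel₀ c (ne_of_gt hlog2)] at h4
        have htri := abs_sub_le (Real.log (μ n)) (Real.log (μ N')) (Real.log (μ N))
        have hexp : (c / Real.log 2) * (Real.log N - Real.log n)
            = (c / Real.log 2) * (Real.log N' - Real.log n)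
              + (c / Real.log 2) * (Real.log N - Real.log N') := by ring
        linarith
  -- extend below N₀
  set D : ℝ := ∑ j ∈ Finset.Icc 1 N₀, |Real.log (μ j)| with hDdef
  have hD0 : 0 ≤ D := Finset.sum_nonneg fun j _ => abs_nonneg _
  have hDle : ∀ j : ℕ, 1 ≤ j → j ≤ N₀ → |Real.log (μ j)| ≤ D := by
    intro j h1 h2
    exact Finset.single_le_sum (f := fun j : ℕ => |Real.log (μ j)|) (fun i _ => abs_nonneg _) (Finset.mem_Icc.2 ⟨h1, h2⟩)
  refine ⟨2*D + c + c / Real.log 2, by positivity, N₀, hN₀1, ?_⟩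
  intro N hN n hn1 hnN
  have hnpos : (0:ℝ) < n := by exact_mod_cast hn1
  have hNpos : (0:ℝ) < N := lt_of_lt_of_le hnpos (by exact_mod_cast hnN)
  have hlogle : Real.log n ≤ Real.log N :=
    Real.log_le_log hnpos (by exact_mod_cast hnN)
  have hcl : 0 ≤ c / Real.log 2 := le_of_lt (div_pos hc0 hlog2)
  by_cases hcase : N₀ ≤ n
  · have h1 := hstep N n hcase hnN
    have h2 : (c / Real.log 2) * (Real.log N - Real.log n)
        ≤ (2*D + c + c / Real.log 2) * (Real.log N - Real.log n) := by
      apply mul_le_mul_of_nonneg_right _ (by linarith)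
      linarith
    nlinarith
  · push_neg at hcase
    have hN₀pos : (0:ℝ) < N₀ := by exact_mod_cast hN₀1
    have h1 := hstep N N₀ le_rfl hN
    have h2 : Real.log n ≤ Real.log N₀ :=
      Real.log_le_log hnpos (by exact_mod_cast (le_of_lt hcase))
    have htri := abs_sub_le (Real.log (μ n)) (Real.log (μ N₀)) (Real.log (μ N))
    have htri2 := abs_sub (Real.log (μ n)) (Real.log (μ N₀))
    have hd1 := hDle n hn1 (le_of_lt hcase)
    have hd2 := hDle N₀ hN₀1 le_rfl
    have h3 : (c / Real.log 2) * (Real.log N - Real.log N₀)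
        ≤ (c / Real.log 2) * (Real.log N - Real.log n) :=
      mul_le_mul_of_nonneg_left (by linarith) hcl
    have h4 : (c / Real.log 2) * (Real.log N - Real.log n)
        ≤ (2*D + c + c / Real.log 2) * (Real.log N - Real.log n) := by
      apply mul_le_mul_of_nonneg_right _ (by linarith)
      linarith
    nlinarith

lemma tailsum (N M : ℕ) (hMN : M ≤ N) :
    ∑ n ∈ Finset.Icc 1 M, (Real.log N - Real.log n) ≤ 4 * Real.sqrt N * Real.sqrt M := by
  have h1 : ∀ n ∈ Finset.Icc 1 M, Real.log N - Real.log n ≤ 2 * Real.sqrt N * (Real.sqrt n)⁻¹ := by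
    intro n hn
    rw [Finset.mem_Icc] at hn
    have hn0 : (0:ℝ) < n := by exact_mod_cast hn.1
    have hN0 : (0:ℝ) < N := lt_of_lt_of_le hn0 (by exact_mod_cast le_trans hn.2 hMN)
    have hsn : (0:ℝ) < Real.sqrt n := Real.sqrt_pos.2 hn0
    have h2 : Real.log N - Real.log n = Real.log ((N:ℝ)/n) :=
      (Real.log_div (ne_of_gt hN0) (ne_of_gt hn0)).symm
    have h3 := log_le_two_sqrt (show (0:ℝ) < (N:ℝ)/n by positivity)
    have h4 : Real.sqrt ((N:ℝ)/n) = Real.sqrt N / Real.sqrt n := Real.sqrt_div hN0.le _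
    rw [h2]
    refine h3.trans (le_of_eq ?_)
    rw [h4]
    field_simp
  calc ∑ n ∈ Finset.Icc 1 M, (Real.log N - Real.log n)
      ≤ ∑ n ∈ Finset.Icc 1 M, 2 * Real.sqrt N * (Real.sqrt n)⁻¹ := Finset.sum_le_sum h1
    _ = 2 * Real.sqrt N * ∑ n ∈ Finset.Icc 1 M, (Real.sqrt n)⁻¹ := by
        rw [Finset.mul_sum]
    _ ≤ 2 * Real.sqrt N * (2 * Real.sqrt M) := by
        apply mul_le_mul_of_nonneg_left (sum_inv_sqrt M) (by positivity)
    _ = 4 * Real.sqrt N * Real.sqrt M := by ring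


lemma fr0 {ε : ℝ} (b : ℝ) (hε : ε ≠ 0) : ε/5*(15*b/ε) = 3*b := by
  field_simp
  ring

lemma fr1 (b C ε : ℝ) (h : C+b+1 ≠ 0) : 4*b*(ε/(20*(C+b+1))) = (ε/5)*(b/(C+b+1)) := by
  field_simp
  ring

lemma fr2 (b C ε : ℝ) (h : C+b+1 ≠ 0) : 5*C*(ε/(20*(C+b+1))) = (ε/4)*(C/(C+b+1)) := by
  field_simp
  ring

lemma fr3 {N : ℝ} (S1 S2 T bb : ℝ) (hN : N ≠ 0) :
    (1/N)*(S1+(S2+bb*T)) - bb = (S1+S2+(bb*T-bb*N))/N := by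
  field_simp
  ring

set_option maxHeartbeats 1000000 in
lemma mainconv (hb : 0 < b) (hpos : ∀ n, 0 < μ n)
    (hrv : ∀ α : ℝ, 0 < α →
      Tendsto (fun n : ℕ => μ ⌊α * n⌋₊ / μ n) atTop (nhds (α ^ (-b)))) :
    Tendsto (fun N : ℕ => (1 / (N : ℝ)) *
        ∑ n ∈ Finset.Icc 1 N, (Real.log (μ n) - Real.log (μ N)))
      atTop (nhds b) := by
  rw [Metric.tendsto_atTop]
  intro ε hε
  obtain ⟨C, hC0, N₁, hN₁1, hpot⟩ := potter hb hpos hrv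
  have hCb1 : (0:ℝ) < C + b + 1 := by linarith
  set δ := min (1/2) ((ε/(20*(C+b+1)))^2) with hδdef
  have hδ0 : 0 < δ := lt_min (by norm_num) (by positivity)
  have hδ1 : δ < 1 := lt_of_le_of_lt (min_le_left _ _) (by norm_num)
  have hsqrtδ : Real.sqrt δ ≤ ε/(20*(C+b+1)) := by
    have h1 := Real.sqrt_le_sqrt (min_le_right (1/2) ((ε/(20*(C+b+1)))^2))
    rwa [Real.sqrt_sq (by positivity)] at h1
  have hsqrtδ0 : 0 ≤ Real.sqrt δ := Real.sqrt_nonneg _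
  have hδle : δ ≤ Real.sqrt δ := by
    nlinarith [Real.sq_sqrt hδ0.le]
  obtain ⟨N₀, huct⟩ := uct hpos hrv hδ0 hδ1 (show (0:ℝ) < ε/5 by linarith)
  -- eventually bound for b(1+log N)/N
  have hev : ∀ᶠ N : ℕ in atTop, b*(1+Real.log N) ≤ (ε/5)*(N:ℝ) := by
    filter_upwards [eventually_ge_atTop (max 1 ⌈(15*b/ε)^2⌉₊)] with N hN
    have hN1 : 1 ≤ N := le_trans (le_max_left _ _) hN
    have hNR : ((15*b/ε)^2 : ℝ) ≤ N := by
      have h1 : (⌈(15*b/ε)^2⌉₊ : ℝ) ≤ N := by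
        exact_mod_cast le_trans (le_max_right _ _) hN
      exact le_trans (Nat.le_ceil _) h1
    have hNpos : (0:ℝ) < N := by exact_mod_cast hN1
    have hsq : Real.sqrt N * Real.sqrt N = (N:ℝ) := Real.mul_self_sqrt hNpos.le
    have h1 : 15*b/ε ≤ Real.sqrt N := by
      have := Real.sqrt_le_sqrt hNR
      rwa [Real.sqrt_sq (by positivity)] at this
    have h2 : (1:ℝ) ≤ Real.sqrt N := by
      rw [show (1:ℝ) = Real.sqrt 1 by simp]
      exact Real.sqrt_le_sqrt (by exact_mod_cast hN1)
    have h3 := log_le_two_sqrt hNpos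
    have e1 : b*(1+Real.log N) ≤ 3*b*Real.sqrt N := by nlinarith
    have e2 : (3:ℝ)*b ≤ (ε/5) * Real.sqrt N := by
      have := mul_le_mul_of_nonneg_left h1 (le_of_lt (show (0:ℝ) < ε/5 by linarith))
      rw [fr0 b (ne_of_gt hε)] at this
      linarith
    calc b*(1+Real.log N) ≤ 3*b*Real.sqrt N := e1
      _ ≤ ((ε/5) * Real.sqrt N) * Real.sqrt N := by nlinarith
      _ = (ε/5)*(N:ℝ) := by rw [mul_assoc, hsq]
  rw [eventually_atTop] at hev
  obtain ⟨N₂, hN₂⟩ := hev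
  refine ⟨max (max N₀ N₁) (max N₂ 1), ?_⟩
  intro N hN
  have hNN₀ : N₀ ≤ N := le_trans (le_trans (le_max_left _ _) (le_max_left _ _)) hN
  have hNN₁ : N₁ ≤ N := le_trans (le_trans (le_max_right _ _) (le_max_left _ _)) hN
  have hNN₂ : N₂ ≤ N := le_trans (le_trans (le_max_left _ _) (le_max_right _ _)) hN
  have hN1 : 1 ≤ N := le_trans (le_trans (le_max_right _ _) (le_max_right _ _)) hN
  have hNpos : (0:ℝ) < N := by exact_mod_cast hN1
  set M := ⌊δ * N⌋₊ with hMdef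
  have hMle : (M:ℝ) ≤ δ * N := Nat.floor_le (by positivity)
  have hMN : M < N := by
    have : (M:ℝ) < N := lt_of_le_of_lt hMle (by nlinarith)
    exact_mod_cast this
  -- sums
  set d : ℕ → ℝ := fun n => Real.log (μ n) with hd
  set S1 := ∑ n ∈ Finset.Ioc 0 M, (d n - d N) with hS1def
  set S2 := ∑ n ∈ Finset.Ioc M N, (d n - d N + b*(Real.log n - Real.log N)) with hS2def
  set T := ∑ n ∈ Finset.Ioc M N, (Real.log N - Real.log n) with hTdef
  have hsplit : ∑ n ∈ Finset.Icc 1 N, (d n - d N) = S1 + (S2 + b*T) := by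
    have h0 : Finset.Icc 1 N = Finset.Ioc 0 N := Finset.Icc_add_one_left_eq_Ioc 0 N
    have h1 := Finset.sum_Ioc_consecutive (fun n => d n - d N) (Nat.zero_le M) hMN.le
    have h2 : ∑ n ∈ Finset.Ioc M N, (d n - d N) = S2 + b*T := by
      rw [hS2def, hTdef, Finset.mul_sum, ← Finset.sum_add_distrib]
      exact Finset.sum_congr rfl fun n _ => by ring
    rw [h0, ← h1, h2]
  have hlogmono : ∀ n ∈ Finset.Ioc 0 M, 0 ≤ Real.log N - Real.log n := by
    intro n hn
    rw [Finset.mem_Ioc] at hn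
    have hn0 : (0:ℝ) < n := by exact_mod_cast hn.1
    have : Real.log n ≤ Real.log N :=
      Real.log_le_log hn0 (by exact_mod_cast le_trans hn.2 hMN.le)
    linarith
  have hsq : Real.sqrt N * Real.sqrt N = (N:ℝ) := Real.mul_self_sqrt hNpos.le
  have htailU : ∑ n ∈ Finset.Ioc 0 M, (Real.log N - Real.log n) ≤ 4*Real.sqrt δ*N := by
    have h5 : ∑ n ∈ Finset.Ioc 0 M, (Real.log N - Real.log n)
        ≤ 4*Real.sqrt N*Real.sqrt M := by
      have := tailsum N M hMN.le
      rwa [show Finset.Icc 1 M = Finset.Ioc 0 M from Finset.Icc_add_one_left_eq_Ioc 0 M] at this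
    have hsM : Real.sqrt M ≤ Real.sqrt δ * Real.sqrt N := by
      rw [← Real.sqrt_mul hδ0.le]
      exact Real.sqrt_le_sqrt hMle
    nlinarith [Real.sqrt_nonneg N, Real.sqrt_nonneg M, Real.sqrt_nonneg δ]
  have hS1bound : |S1| ≤ C * (δ + 4*Real.sqrt δ) * N := by
    have h1 : |S1| ≤ ∑ n ∈ Finset.Ioc 0 M, |d n - d N| := Finset.abs_sum_le_sum_abs _ _
    have h3 : ∑ n ∈ Finset.Ioc 0 M, |d n - d N|
        ≤ ∑ n ∈ Finset.Ioc 0 M, C*(1 + (Real.log N - Real.log n)) := by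
      refine Finset.sum_le_sum fun n hn => ?_
      rw [Finset.mem_Ioc] at hn
      exact hpot N hNN₁ n hn.1 (le_trans hn.2 hMN.le)
    have h4 : ∑ n ∈ Finset.Ioc 0 M, C*(1 + (Real.log N - Real.log n))
        = C*M + C*∑ n ∈ Finset.Ioc 0 M, (Real.log N - Real.log n) := by
      rw [← Finset.mul_sum, Finset.sum_add_distrib, Finset.sum_const, Nat.card_Ioc,
        Nat.sub_zero]
      push_cast
      ring
    have h7 : C*(M:ℝ) ≤ C*(δ*N) := mul_le_mul_of_nonneg_left hMle hC0.le
    have h8 : C*∑ n ∈ Finset.Ioc 0 M, (Real.log N - Real.log n) ≤ C*(4*Real.sqrt δ*N) :=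
      mul_le_mul_of_nonneg_left htailU hC0.le
    calc |S1| ≤ C*M + C*∑ n ∈ Finset.Ioc 0 M, (Real.log N - Real.log n) := by linarith
      _ ≤ C*(δ*N) + C*(4*Real.sqrt δ*N) := by linarith
      _ = C*(δ + 4*Real.sqrt δ)*N := by ring
  have hS2bound : |S2| ≤ (ε/5)*N := by
    have h1 : |S2| ≤ ∑ n ∈ Finset.Ioc M N, |d n - d N + b*(Real.log n - Real.log N)| :=
      Finset.abs_sum_le_sum_abs _ _
    have h2 : ∀ n ∈ Finset.Ioc M N, |d n - d N + b*(Real.log n - Real.log N)| ≤ ε/5 := by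
      intro n hn
      rw [Finset.mem_Ioc] at hn
      refine huct N hNN₀ n ?_ hn.2
      have hfl := Nat.lt_floor_add_one (δ*(N:ℝ))
      have h3 : (M:ℝ)+1 ≤ n := by exact_mod_cast hn.1
      linarith
    have h3 := Finset.sum_le_sum h2
    rw [Finset.sum_const, Nat.card_Ioc, nsmul_eq_mul] at h3
    have h4 : ((N - M : ℕ):ℝ) ≤ N := by
      have : N - M ≤ N := Nat.sub_le _ _
      exact_mod_cast this
    calc |S2| ≤ ((N-M:ℕ):ℝ)*(ε/5) := le_trans h1 h3
      _ ≤ (N:ℝ)*(ε/5) := mul_le_mul_of_nonneg_right h4 (by linarith)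
      _ = (ε/5)*N := by ring
  have hTfull : ∑ n ∈ Finset.Ioc 0 N, (Real.log N - Real.log n)
      = N*Real.log N - ∑ n ∈ Finset.Icc 1 N, Real.log n := by
    rw [show Finset.Ioc 0 N = Finset.Icc 1 N from (Finset.Icc_add_one_left_eq_Ioc 0 N).symm,
      Finset.sum_sub_distrib, Finset.sum_const, Nat.card_Icc]
    push_cast [Nat.sub_zero]
    ring
  have hfb := fact_bounds N hN1
  have htail0 : 0 ≤ ∑ n ∈ Finset.Ioc 0 M, (Real.log N - Real.log n) :=
    Finset.sum_nonneg hlogmono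
  have hTsplit : ∑ n ∈ Finset.Ioc 0 M, (Real.log N - Real.log n) + T
      = ∑ n ∈ Finset.Ioc 0 N, (Real.log N - Real.log n) :=
    Finset.sum_Ioc_consecutive _ (Nat.zero_le M) hMN.le
  have hTu : T ≤ N := by
    have h9 : ∑ n ∈ Finset.Ioc 0 N, (Real.log N - Real.log n) ≤ N := by
      rw [hTfull]; linarith [hfb.1]
    linarith
  have hTl : (N:ℝ) - (1 + Real.log N) - 4*Real.sqrt δ*N ≤ T := by
    have h9 : (N:ℝ) - 1 - Real.log N ≤ ∑ n ∈ Finset.Ioc 0 N, (Real.log N - Real.log n) := by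
      rw [hTfull]; linarith [hfb.2]
    linarith
  -- final computation
  rw [Real.dist_eq]
  have hglue : (1/(N:ℝ)) * ∑ n ∈ Finset.Icc 1 N, (d n - d N) - b
      = (S1 + S2 + (b*T - b*N))/N := by
    rw [hsplit, fr3 S1 S2 T b (ne_of_gt hNpos)]
  rw [hglue, abs_div, abs_of_pos hNpos, div_lt_iff₀ hNpos]
  have hbfrac : b/(C+b+1) ≤ 1 := (div_le_one hCb1).2 (by linarith)
  have hCfrac : C/(C+b+1) ≤ 1 := (div_le_one hCb1).2 (by linarith)
  have hbT : |b*T - b*N| ≤ (ε/5)*N + (ε/5)*N := by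
    have hTbN : b*T - b*N ≤ 0 := by
      have := mul_le_mul_of_nonneg_left hTu hb.le
      linarith
    rw [abs_of_nonpos hTbN]
    have h11 : b*(1+Real.log N) ≤ (ε/5)*N := hN₂ N hNN₂
    have h12 : b*(4*Real.sqrt δ*N) ≤ (ε/5)*N := by
      have h13 : 4*b*Real.sqrt δ ≤ 4*b*(ε/(20*(C+b+1))) :=
        mul_le_mul_of_nonneg_left hsqrtδ (by positivity)
      have h14 := fr1 b C ε (ne_of_gt hCb1)
      have h15 : (ε/5)*(b/(C+b+1)) ≤ (ε/5)*1 :=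
        mul_le_mul_of_nonneg_left hbfrac (by linarith)
      have h16 : 4*b*Real.sqrt δ*(N:ℝ) ≤ (ε/5)*(N:ℝ) := by
        apply mul_le_mul_of_nonneg_right _ hNpos.le
        linarith
      linarith [h16]
    have h10 : b*((N:ℝ) - T) ≤ b*((1+Real.log N) + 4*Real.sqrt δ*N) :=
      mul_le_mul_of_nonneg_left (by linarith) hb.le
    have h17 : b*((1+Real.log N) + 4*Real.sqrt δ*N)
        = b*(1+Real.log N) + b*(4*Real.sqrt δ*N) := by ring
    have h18 : -(b*T - b*N) = b*((N:ℝ) - T) := by ring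
    linarith
  have hCd : C*(δ + 4*Real.sqrt δ) ≤ ε/4 := by
    have h13 : δ + 4*Real.sqrt δ ≤ 5*Real.sqrt δ := by linarith
    have h14 : C*(δ + 4*Real.sqrt δ) ≤ C*(5*Real.sqrt δ) :=
      mul_le_mul_of_nonneg_left h13 hC0.le
    have h15 : C*(5*Real.sqrt δ) ≤ 5*C*(ε/(20*(C+b+1))) := by
      have := mul_le_mul_of_nonneg_left hsqrtδ (by positivity : (0:ℝ) ≤ 5*C)
      linarith
    have h16 := fr2 b C ε (ne_of_gt hCb1)
    have h17 : (ε/4)*(C/(C+b+1)) ≤ (ε/4)*1 :=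
      mul_le_mul_of_nonneg_left hCfrac (by linarith)
    linarith
  have hfin1 : C*(δ + 4*Real.sqrt δ)*(N:ℝ) ≤ (ε/4)*(N:ℝ) :=
    mul_le_mul_of_nonneg_right hCd hNpos.le
  have hfin2 : (0:ℝ) < ε * N := by positivity
  calc |S1 + S2 + (b*T - b*N)| ≤ |S1| + |S2| + |b*T - b*N| := abs_add_three _ _ _
    _ ≤ C*(δ + 4*Real.sqrt δ)*N + (ε/5)*N + ((ε/5)*N + (ε/5)*N) := by linarith
    _ < ε * N := by linarith


end helpers

theorem stmt4 (b : ℝ) (hb : 0 < b) (μ : ℕ → ℝ) (hpos : ∀ n, 0 < μ n)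
    (hrv : ∀ α : ℝ, 0 < α →
      Tendsto (fun n : ℕ => μ ⌊α * n⌋₊ / μ n) atTop (nhds (α ^ (-b)))) :
    Tendsto (fun N : ℕ => (1 / (N : ℝ)) * ∑ n ∈ Finset.Icc 1 N, Real.logb 2 (μ n / μ N))
      atTop (nhds (b / Real.log 2)) := by
  have h := (mainconv hb hpos hrv).div_const (Real.log 2)
  refine h.congr (fun N => ?_)
  simp only [Real.logb, Real.log_div (ne_of_gt (hpos _)) (ne_of_gt (hpos _))]
  rw [← Finset.sum_div]
  ring
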